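/- For Hermitian matrices A_1, ..., A_n (n ≥ 2) and a density matrix ρ, Σ_{i=1}^n I_ρ(A_i) ≥ (1/(2(n−1))) Σ_{1≤i<j≤n} I_ρ(A_i − A_j). -/

import Mathlib

open Matrix Finset
open scoped ComplexOrder

/-- The positive semidefinite square root of a positive semidefinite matrix
(the definition `Matrix.PosSemidef.sqrt` of the older Mathlib, since removed). -/
noncomputable def Matrix.PosSemidef.oldSqrt {n 𝕜 : Type*} [Fintype n] [DecidableEq n] [RCLike 𝕜]
    {A : Matrix n n 𝕜} (hA : A.PosSemidef) : Matrix n n 𝕜 :=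
  hA.1.eigenvectorUnitary.1 * diagonal ((↑) ∘ (√·) ∘ hA.1.eigenvalues) *
  (star hA.1.eigenvectorUnitary : Matrix n n 𝕜)

/-- Wigner–Yanase skew information `I_ρ(H) = (1/2)‖[√ρ, H]‖²` (Frobenius norm). -/
noncomputable def skewInfoR {d : ℕ} {ρ : Matrix (Fin d) (Fin d) ℂ}
    (hρ : ρ.PosSemidef) (H : Matrix (Fin d) (Fin d) ℂ) : ℝ :=
  1 / 2 * ∑ i, ∑ j, ‖(hρ.oldSqrt * H - H * hρ.oldSqrt) i j‖ ^ 2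

lemma skewInfoR_sub_le {d : ℕ} {ρ : Matrix (Fin d) (Fin d) ℂ}
    (hρ : ρ.PosSemidef) (A B : Matrix (Fin d) (Fin d) ℂ) :
    skewInfoR hρ (A - B) ≤ 2 * skewInfoR hρ A + 2 * skewInfoR hρ B := by
  unfold skewInfoR
  have key : ∀ i j : Fin d, ‖(hρ.oldSqrt * (A - B) - (A - B) * hρ.oldSqrt) i j‖ ^ 2
      ≤ 2 * ‖(hρ.oldSqrt * A - A * hρ.oldSqrt) i j‖ ^ 2
        + 2 * ‖(hρ.oldSqrt * B - B * hρ.oldSqrt) i j‖ ^ 2 := by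
    intro i j
    have hentry : (hρ.oldSqrt * (A - B) - (A - B) * hρ.oldSqrt) i j
        = (hρ.oldSqrt * A - A * hρ.oldSqrt) i j - (hρ.oldSqrt * B - B * hρ.oldSqrt) i j := by
      simp [Matrix.mul_sub, Matrix.sub_mul, Matrix.sub_apply]
      ring
    rw [hentry]
    set x := (hρ.oldSqrt * A - A * hρ.oldSqrt) i j
    set y := (hρ.oldSqrt * B - B * hρ.oldSqrt) i j
    have h1 := norm_sub_le x y
    nlinarith [norm_nonneg x, norm_nonneg y, sq_nonneg (‖x‖ - ‖y‖), norm_nonneg (x - y)]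
  calc 1 / 2 * ∑ i, ∑ j, ‖(hρ.oldSqrt * (A - B) - (A - B) * hρ.oldSqrt) i j‖ ^ 2
      ≤ 1 / 2 * ∑ i, ∑ j, (2 * ‖(hρ.oldSqrt * A - A * hρ.oldSqrt) i j‖ ^ 2
        + 2 * ‖(hρ.oldSqrt * B - B * hρ.oldSqrt) i j‖ ^ 2) := by
        gcongr with i _ j _
        exact key i j
    _ = 2 * (1 / 2 * ∑ i, ∑ j, ‖(hρ.oldSqrt * A - A * hρ.oldSqrt) i j‖ ^ 2)
        + 2 * (1 / 2 * ∑ i, ∑ j, ‖(hρ.oldSqrt * B - B * hρ.oldSqrt) i j‖ ^ 2) := by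
        simp only [Finset.sum_add_distrib, ← Finset.mul_sum]
        ring

lemma pair_sum_count {n : ℕ} (g : Fin n → ℝ) :
    ∑ p ∈ Finset.univ.filter (fun p : Fin n × Fin n => p.1 < p.2), (g p.1 + g p.2)
      = ((n : ℝ) - 1) * ∑ i, g i := by
  have hswap : ∑ p ∈ Finset.univ.filter (fun p : Fin n × Fin n => p.1 < p.2), g p.2
      = ∑ p ∈ Finset.univ.filter (fun p : Fin n × Fin n => p.2 < p.1), g p.1 := by
    apply Finset.sum_nbij' (fun p => Prod.swap p) (fun p => Prod.swap p) <;>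
      simp [Finset.mem_filter]
  have hunion : (Finset.univ.filter (fun p : Fin n × Fin n => p.1 ≠ p.2))
      = Finset.univ.filter (fun p : Fin n × Fin n => p.1 < p.2)
        ∪ Finset.univ.filter (fun p : Fin n × Fin n => p.2 < p.1) := by
    ext p
    simp only [Finset.mem_filter, Finset.mem_union, Finset.mem_univ, true_and]
    constructor
    · exact fun h => lt_or_gt_of_ne h
    · rintro (h | h) <;> [exact ne_of_lt h; exact (ne_of_lt h).symm]
  have hdisj : Disjoint (Finset.univ.filter (fun p : Fin n × Fin n => p.1 < p.2))
      (Finset.univ.filter (fun p : Fin n × Fin n => p.2 < p.1)) := by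
    rw [Finset.disjoint_left]
    intro p h1 h2
    simp only [Finset.mem_filter] at h1 h2
    exact absurd h2.2 (not_lt_of_gt h1.2)
  have hne : ∑ p ∈ Finset.univ.filter (fun p : Fin n × Fin n => p.1 ≠ p.2), g p.1
      = ((n : ℝ) - 1) * ∑ i, g i := by
    rw [Finset.sum_filter, ← Finset.univ_product_univ, Finset.sum_product]
    have : ∀ i : Fin n, (∑ j : Fin n, if (i, j).1 ≠ (i, j).2 then g i else 0)
        = ((n : ℝ) - 1) * g i := by
      intro i
      have : ∀ j : Fin n, (if (i, j).1 ≠ (i, j).2 then g i else 0)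
          = g i - (if i = j then g i else 0) := by
        intro j
        by_cases h : i = j <;> simp [h]
      simp_rw [this, Finset.sum_sub_distrib, Finset.sum_const, Finset.sum_ite_eq,
        Finset.mem_univ, if_pos, Finset.card_univ, Fintype.card_fin, nsmul_eq_mul]
      ring
    simp_rw [this]
    rw [Finset.mul_sum]
  rw [Finset.sum_add_distrib, hswap, ← hne, hunion, Finset.sum_union hdisj]

theorem skewInfo_sum_ge_pairs_sub {d n : ℕ} (hn : 2 ≤ n)
    (ρ : Matrix (Fin d) (Fin d) ℂ) (hρ : ρ.PosSemidef) (hτ : ρ.trace = 1)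
    (A : Fin n → Matrix (Fin d) (Fin d) ℂ) (hA : ∀ i, (A i).IsHermitian) :
    ∑ i, skewInfoR hρ (A i) ≥
      (1 / (2 * ((n : ℝ) - 1))) *
        ∑ p ∈ Finset.univ.filter (fun p : Fin n × Fin n => p.1 < p.2),
          skewInfoR hρ (A p.1 - A p.2) := by
  have hn2 : (2:ℝ) ≤ (n:ℝ) := by exact_mod_cast hn
  have hpos : (0:ℝ) < 2 * ((n:ℝ) - 1) := by linarith
  have hP : ∑ p ∈ Finset.univ.filter (fun p : Fin n × Fin n => p.1 < p.2),
      skewInfoR hρ (A p.1 - A p.2)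
      ≤ 2 * ((n:ℝ) - 1) * ∑ i, skewInfoR hρ (A i) := by
    calc ∑ p ∈ Finset.univ.filter (fun p : Fin n × Fin n => p.1 < p.2),
          skewInfoR hρ (A p.1 - A p.2)
        ≤ ∑ p ∈ Finset.univ.filter (fun p : Fin n × Fin n => p.1 < p.2),
          (2 * skewInfoR hρ (A p.1) + 2 * skewInfoR hρ (A p.2)) := by
          apply Finset.sum_le_sum
          intro p _
          exact skewInfoR_sub_le hρ (A p.1) (A p.2)
      _ = 2 * ∑ p ∈ Finset.univ.filter (fun p : Fin n × Fin n => p.1 < p.2),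
          (skewInfoR hρ (A p.1) + skewInfoR hρ (A p.2)) := by
          rw [Finset.mul_sum]; congr 1; ext p; ring
      _ = 2 * (((n:ℝ) - 1) * ∑ i, skewInfoR hρ (A i)) := by
          rw [pair_sum_count (fun i => skewInfoR hρ (A i))]
      _ = 2 * ((n:ℝ) - 1) * ∑ i, skewInfoR hρ (A i) := by ring
  rw [ge_iff_le, div_mul_eq_mul_div, one_mul, div_le_iff₀ hpos]
  linarith [hP]
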